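/- The intersection of the inner automorphism group Inn(F_n) with the palindromic automorphism group ΠA_n is trivial for all n ≥ 1. -/

import Mathlib

namespace PalAux
open FreeGroup

variable {α : Type*} [DecidableEq α]

/-- flip the exponent of a letter -/
def flipB (p : α × Bool) : α × Bool := (p.1, !p.2)

omit [DecidableEq α] in
lemma map_flip_eq (L : List (α × Bool)) : L.map flipB = invRev L.reverse := by
  simp [invRev, flipB]

omit [DecidableEq α] in
lemma invRev_eq (L : List (α × Bool)) : invRev L = (L.map flipB).reverse := rfl

lemma reduce_map_flip (L : List (α × Bool)) :
    reduce (L.map flipB) = (reduce L).map flipB := by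
  induction L with
  | nil => rfl
  | cons p t ih =>
    rw [List.map_cons, reduce.cons, reduce.cons, ih]
    cases h : reduce t with
    | nil => rfl
    | cons hd tl =>
      simp only [List.map_cons, flipB]
      by_cases hcond : p.1 = hd.1 ∧ p.2 = !hd.2
      · rw [if_pos hcond]
        obtain ⟨h1, h2⟩ := hcond
        simp [h1, h2]
      · rw [if_neg hcond]
        split_ifs with hs
        · exfalso; exact (show ¬(p.1 = hd.1 ∧ (!p.2) = !!hd.2) by rintro ⟨h1, h2⟩; exact hcond ⟨h1, by
          rcases Bool.eq_false_or_eq_true p.2 with hb | hb <;>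
          rcases Bool.eq_false_or_eq_true hd.2 with hc | hc <;> simp_all⟩) hs
        · simp [hs, flipB]
          intro h1 h2
          exact absurd ⟨h1, h2⟩ hcond

/-- the inversion endomorphism σ sending each generator to its inverse -/
def sig : FreeGroup α →* FreeGroup α := FreeGroup.lift fun a => (FreeGroup.of a)⁻¹

omit [DecidableEq α] in
lemma sig_of (a : α) : sig (FreeGroup.of a) = (FreeGroup.of a)⁻¹ := FreeGroup.lift_apply_of

omit [DecidableEq α] in
lemma sig_mk (L : List (α × Bool)) : sig (mk L) = mk (L.map flipB) := by
  induction L with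
  | nil => simp [FreeGroup.one_eq_mk.symm]
  | cons p t ih =>
    have h1 : mk (p :: t) = mk [p] * mk t := by rw [mul_mk]; rfl
    rw [h1, _root_.map_mul, ih, List.map_cons]
    have h2 : mk (flipB p :: t.map flipB) = mk [flipB p] * mk (t.map flipB) := by
      rw [mul_mk]; rfl
    rw [h2]
    congr 1
    rcases p with ⟨x, b⟩
    cases b
    · show sig (mk [(x, false)]) = mk [(x, true)]
      have h3 : mk [(x, false)] = (FreeGroup.of x)⁻¹ := by
        rw [FreeGroup.of, inv_mk]; rfl
      rw [h3, _root_.map_inv, sig_of, inv_inv]; rfl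
    · show sig (mk [(x, true)]) = mk [(x, false)]
      have h3 : mk [(x, true)] = FreeGroup.of x := rfl
      rw [h3, sig_of, FreeGroup.of, inv_mk]; rfl

lemma sig_pal {h : FreeGroup α} (hp : h.toWord.reverse = h.toWord) : sig h = h⁻¹ := by
  conv_lhs => rw [← FreeGroup.mk_toWord (x := h)]
  rw [sig_mk, map_flip_eq, hp, ← inv_mk, FreeGroup.mk_toWord]

lemma eq_one_of_sig_eq (g : FreeGroup α) (h : sig g = g) : g = 1 := by
  have h1 : (toWord g).map flipB = toWord g := by
    conv_lhs at h => rw [← FreeGroup.mk_toWord (x := g), sig_mk]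
    have := congrArg FreeGroup.toWord h
    rwa [toWord_mk, reduce_map_flip, reduce_toWord] at this
  rcases hw : toWord g with _ | ⟨⟨x, b⟩, t⟩
  · exact toWord_eq_nil_iff.mp hw
  · rw [hw, List.map_cons] at h1
    have h2 := List.head_eq_of_cons_eq h1
    exfalso
    have hb : (!b) = b := congrArg Prod.snd h2
    simp at hb

lemma reduce_cons_of_head {L : List (α × Bool)} (hL : reduce L = L) (p : α × Bool)
    (hh : L.head? ≠ some (p.1, !p.2)) : reduce (p :: L) = p :: L := by
  cases L with
  | nil => rw [reduce.cons, hL]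
  | cons hd tl =>
    rw [reduce.cons, hL]
    show (if p.1 = hd.1 ∧ p.2 = !hd.2 then tl else p :: hd :: tl) = p :: hd :: tl
    rw [if_neg]
    rintro ⟨h1, h2⟩
    apply hh
    simp only [List.head?_cons]
    congr 1
    exact Prod.ext h1.symm (by rw [h2]; simp)

omit [DecidableEq α] in
lemma replicate_of_append_singleton {a : α × Bool} :
    ∀ (l : List (α × Bool)), l ++ [a] = a :: l → l = List.replicate l.length a := by
  intro l
  induction l with
  | nil => intro; rfl
  | cons b t ih =>
    intro h
    simp only [List.cons_append] at h
    obtain ⟨hb, ht⟩ := List.cons.injEq .. ▸ h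
    subst hb
    rw [List.length_cons, List.replicate_succ]
    exact congrArg _ (ih ht)

lemma central_eq_one (c : FreeGroup α) (hc : ∀ x : α, c * FreeGroup.of x = FreeGroup.of x * c)
    {i j : α} (hij : i ≠ j) : c = 1 := by
  by_contra hne
  set L := toWord c with hL
  have hLred : reduce L = L := reduce_toWord c
  have hLne : L ≠ [] := fun h => hne (toWord_eq_nil_iff.mp h)
  rcases hhd : L with _ | ⟨⟨y, b⟩, t⟩
  · exact hLne hhd
  set x : α := if y = i then j else i with hx
  have hxy : x ≠ y := by
    by_cases h : y = i
    · simp [hx, h]; exact fun hc => hij hc.symm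
    · simpa [hx, h] using fun hc => h hc.symm
  have h2 : toWord (FreeGroup.of x * c) = (x, true) :: L := by
    conv_lhs => rw [← FreeGroup.mk_toWord (x := c), FreeGroup.of, mul_mk]
    rw [List.singleton_append, toWord_mk]
    exact reduce_cons_of_head hLred (x, true) (by
      rw [hhd]; simp only [List.head?_cons]
      intro hcon
      exact hxy (congrArg Prod.fst (Option.some.inj hcon)).symm)
  -- rule out cancellation at the end
  have hlast : L.getLast? ≠ some (x, false) := by
    intro hcon
    obtain ⟨M, hM⟩ := List.getLast?_eq_some_iff.mp hcon
    have hmk : c * FreeGroup.of x = mk M := by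
      have e1 : c = mk (M ++ [(x, false)]) := by
        conv_lhs => rw [← FreeGroup.mk_toWord (x := c), ← hL, hM]
      rw [e1, FreeGroup.of, mul_mk, List.append_assoc, ← mul_mk]
      have e2 : mk ([(x, false)] ++ [(x, true)]) = 1 := by
        rw [← mul_mk]
        have ha : mk [(x, false)] = (FreeGroup.of x)⁻¹ := by
          rw [FreeGroup.of, inv_mk]; rfl
        rw [ha]
        exact inv_mul_cancel _
      rw [e2, mul_one]
    have h3 : ((x, true) :: L) = reduce M := by
      rw [← h2, ← hc x, hmk, ← toWord_mk]
    have hlen : ((x, true) :: L).length ≤ M.length := by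
      rw [h3]
      exact (Red.sublist reduce.red).length_le
    rw [hM] at hlen
    simp at hlen
  -- the key equation with no cancellation
  have hkey : L ++ [(x, true)] = (x, true) :: L := by
    have hA : toWord (c * FreeGroup.of x) = reduce (L ++ [(x, true)]) := by
      conv_lhs => rw [← FreeGroup.mk_toWord (x := c), FreeGroup.of, mul_mk]
      exact toWord_mk
    have hinv : invRev (L ++ [(x, true)]) = (x, false) :: invRev L := by
      simp [invRev]
    have hinvred : reduce (invRev L) = invRev L := by
      rw [reduce_invRev, hLred]
    have hh : (invRev L).head? ≠ some (x, !false) := by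
      rw [invRev_eq]
      intro hcon
      rw [List.head?_reverse, List.getLast?_map] at hcon
      cases hgo : L.getLast? with
      | none => rw [hgo] at hcon; simp at hcon
      | some p =>
        rw [hgo] at hcon
        have hcon2 : flipB p = (x, !false) := by
          apply Option.some.inj
          simpa using hcon
        apply hlast
        rw [hgo]
        have hp1 : p.1 = x := congrArg Prod.fst hcon2
        have hp2 : (!p.2) = !false := congrArg Prod.snd hcon2
        have : p.2 = false := by simpa using hp2
        rw [show p = (x, false) from Prod.ext hp1 this]
    have hr := reduce_cons_of_head hinvred (x, false) hh
    have hred : reduce (L ++ [(x, true)]) = L ++ [(x, true)] :=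
      calc reduce (L ++ [(x, true)])
          = invRev (invRev (reduce (L ++ [(x, true)]))) := by rw [invRev_invRev]
        _ = invRev (reduce (invRev (L ++ [(x, true)]))) := by rw [reduce_invRev]
        _ = invRev ((x, false) :: invRev L) := by rw [hinv, hr]
        _ = L ++ [(x, true)] := by
            simp [invRev, flipB, Function.comp_def, Bool.not_not]
    rw [← hred, ← hA, hc x, h2]
  have hrep := replicate_of_append_singleton L hkey
  rw [hhd] at hrep
  rw [List.length_cons, List.replicate_succ] at hrep
  have h4 : (y, b) = (x, true) := (List.cons_eq_cons.mp hrep).1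
  exact hxy (congrArg Prod.fst h4).symm



omit [DecidableEq α] in
lemma commute_gen_of_all_eq (hall : ∀ a b : α, a = b) (g : FreeGroup α) (i : α) :
    g * FreeGroup.of i = FreeGroup.of i * g := by
  have hg : g ∈ Subgroup.closure (Set.range (FreeGroup.of : α → FreeGroup α)) := by
    rw [FreeGroup.closure_range_of]; trivial
  induction hg using Subgroup.closure_induction with
  | mem z hz =>
    obtain ⟨a, rfl⟩ := hz
    rw [hall a i]
  | one => rw [one_mul, mul_one]
  | mul u v _ _ hu hv => rw [mul_assoc, hv, ← mul_assoc, hu, mul_assoc]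
  | inv u _ hu =>
    have := congrArg (fun z => u⁻¹ * z * u⁻¹) hu
    simpa [mul_assoc] using this.symm

end PalAux


/-- An element of a free group is a palindrome if its reduced word reads the
same backwards as forwards. -/
def IsPalindrome {n : ℕ} (g : FreeGroup (Fin n)) : Prop :=
  g.toWord.reverse = g.toWord

/-- The intersection of `Inn(F_n)` with the palindromic automorphism group
`ΠA_n` is trivial, for all `n ≥ 1`: an inner automorphism sending every basis
element to a palindrome is the identity. -/
theorem inn_inter_palindromic_trivial {n : ℕ} (hn : 1 ≤ n)
    (α : MulAut (FreeGroup (Fin n)))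
    (hpal : ∀ i : Fin n, IsPalindrome (α (FreeGroup.of i)))
    (hinn : ∃ g : FreeGroup (Fin n), ∀ x, α x = g * x * g⁻¹) :
    α = 1 := by
  obtain ⟨g, hg⟩ := hinn
  have key : ∀ i : Fin n, α (FreeGroup.of i) = FreeGroup.of i := by
    by_cases hss : ∀ a b : Fin n, a = b
    · intro i
      rw [hg, PalAux.commute_gen_of_all_eq hss g i, mul_inv_cancel_right]
    · push_neg at hss
      obtain ⟨a, b, hab⟩ := hss
      set s := PalAux.sig g with hs
      have hsg : ∀ x : Fin n,
          s * FreeGroup.of x * s⁻¹ = g * FreeGroup.of x * g⁻¹ := by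
        intro x
        have h1 : PalAux.sig (α (FreeGroup.of x)) = (α (FreeGroup.of x))⁻¹ :=
          PalAux.sig_pal (hpal x)
        rw [hg, _root_.map_mul, _root_.map_mul, _root_.map_inv, PalAux.sig_of, ← hs] at h1
        have h2 := congrArg Inv.inv h1
        simpa [mul_assoc] using h2
      have hcomm : ∀ x : Fin n,
          (g⁻¹ * s) * FreeGroup.of x = FreeGroup.of x * (g⁻¹ * s) := by
        intro x
        have h' : g⁻¹ * (s * FreeGroup.of x * s⁻¹) * s
            = g⁻¹ * (g * FreeGroup.of x * g⁻¹) * s := by rw [hsg x]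
        simpa [mul_assoc] using h'
      have hc1 : g⁻¹ * s = 1 := PalAux.central_eq_one _ hcomm hab
      have hgs : s = g := by
        have := congrArg (g * ·) hc1
        simpa [mul_assoc] using this
      have hg1 : g = 1 := PalAux.eq_one_of_sig_eq g (by rw [← hs, hgs])
      intro i
      rw [hg, hg1]
      simp
  apply MulEquiv.toMonoidHom_injective
  exact FreeGroup.ext_hom _ _ (fun i => by simpa using key i)
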